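/- Let S be a random vector uniformly distributed on the four points (1,0,2,0), (0,2,1,0), (1,0,0,2), (0,2,0,1) in ℝ^4 (each with probability 1/4). Then S is not NRD, not NLTD, and not NRTD. In particular, E[S_3 | S_1 = 0] = 1/2 < 1 = E[S_3 | S_1 = 1], E[S_3 | S_1 ≤ 0] = 1/2 < 3/4 = E[S_3 | S_1 ≤ 1], and E[S_3 | S_1 ≥ 0] = 3/4 < 1 = E[S_3 | S_1 ≥ 1]. -/

import Mathlib

open scoped Classical
open Finset

noncomputable section

/-- Probability of the event `A` on a finite sample space with weights `w`. -/
def Pr {Ω : Type*} [Fintype Ω] (w : Ω → ℝ) (A : Ω → Prop) : ℝ :=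
  ∑ ω : Ω, if A ω then w ω else 0

/-- Expectation of `f` on a finite sample space with weights `w`. -/
def Expec {Ω : Type*} [Fintype Ω] (w : Ω → ℝ) (f : Ω → ℝ) : ℝ :=
  ∑ ω : Ω, w ω * f ω

/-- Conditional expectation of `f` given the event `A` under weights `w`. -/
def CExp {Ω : Type*} [Fintype Ω] (w : Ω → ℝ) (A : Ω → Prop) (f : Ω → ℝ) : ℝ :=
  (∑ ω : Ω, if A ω then w ω * f ω else 0) / Pr w A

/-- `[X_I | A] ≤_st [X_I | B]` : the conditional distribution of the subvector `X_I`
given the event `A` is dominated, in the usual stochastic order, by the conditional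
distribution of `X_I` given `B`; i.e. conditional expectations of every bounded
coordinatewise increasing function compare. -/
def CondSubvecStochLE {Ω : Type*} [Fintype Ω] {n : ℕ} (w : Ω → ℝ)
    (X : Ω → Fin n → ℝ) (I : Finset (Fin n)) (A B : Ω → Prop) : Prop :=
  ∀ φ : ({i : Fin n // i ∈ I} → ℝ) → ℝ, Monotone φ → (∃ C, ∀ v, |φ v| ≤ C) →
    CExp w A (fun ω => φ fun i => X ω i.1) ≤ CExp w B (fun ω => φ fun i => X ω i.1)

/-- Negative regression dependence: `[X_I | X_J = x_J] ≥_st [X_I | X_J = x_J*]`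
whenever `x_J ≤ x_J*` componentwise and both conditioning events have
positive probability. -/
def IsNRD {Ω : Type*} [Fintype Ω] {n : ℕ} (w : Ω → ℝ) (X : Ω → Fin n → ℝ) : Prop :=
  ∀ I J : Finset (Fin n), Disjoint I J → ∀ x y : Fin n → ℝ, (∀ j ∈ J, x j ≤ y j) →
    0 < Pr w (fun ω => ∀ j ∈ J, X ω j = x j) →
    0 < Pr w (fun ω => ∀ j ∈ J, X ω j = y j) →
    CondSubvecStochLE w X I (fun ω => ∀ j ∈ J, X ω j = y j)
      (fun ω => ∀ j ∈ J, X ω j = x j)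

/-- Negative left-tail dependence: `[X_I | X_J ≤ x_J] ≥_st [X_I | X_J ≤ x_J*]`
whenever `x_J ≤ x_J*` componentwise and both conditioning events have
positive probability. -/
def IsNLTD {Ω : Type*} [Fintype Ω] {n : ℕ} (w : Ω → ℝ) (X : Ω → Fin n → ℝ) : Prop :=
  ∀ I J : Finset (Fin n), Disjoint I J → ∀ x y : Fin n → ℝ, (∀ j ∈ J, x j ≤ y j) →
    0 < Pr w (fun ω => ∀ j ∈ J, X ω j ≤ x j) →
    0 < Pr w (fun ω => ∀ j ∈ J, X ω j ≤ y j) →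
    CondSubvecStochLE w X I (fun ω => ∀ j ∈ J, X ω j ≤ y j)
      (fun ω => ∀ j ∈ J, X ω j ≤ x j)

/-- Negative right-tail dependence: `[X_I | X_J > x_J] ≥_st [X_I | X_J > x_J*]`
whenever `x_J ≤ x_J*` componentwise and both conditioning events have
positive probability. -/
def IsNRTD {Ω : Type*} [Fintype Ω] {n : ℕ} (w : Ω → ℝ) (X : Ω → Fin n → ℝ) : Prop :=
  ∀ I J : Finset (Fin n), Disjoint I J → ∀ x y : Fin n → ℝ, (∀ j ∈ J, x j ≤ y j) →
    0 < Pr w (fun ω => ∀ j ∈ J, x j < X ω j) →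
    0 < Pr w (fun ω => ∀ j ∈ J, y j < X ω j) →
    CondSubvecStochLE w X I (fun ω => ∀ j ∈ J, y j < X ω j)
      (fun ω => ∀ j ∈ J, x j < X ω j)

/-- Negative association on a finite weighted sample space:
`Cov(ψ₁(X_{A₁}), ψ₂(X_{A₂})) ≤ 0` for disjoint `A₁, A₂` and bounded
coordinatewise increasing `ψ₁, ψ₂`. -/
def IsNAfin {Ω : Type*} [Fintype Ω] {n : ℕ} (w : Ω → ℝ) (X : Ω → Fin n → ℝ) : Prop :=
  ∀ A₁ A₂ : Finset (Fin n), Disjoint A₁ A₂ →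
    ∀ ψ₁ : ({i : Fin n // i ∈ A₁} → ℝ) → ℝ, ∀ ψ₂ : ({i : Fin n // i ∈ A₂} → ℝ) → ℝ,
      Monotone ψ₁ → Monotone ψ₂ → (∃ C, ∀ v, |ψ₁ v| ≤ C) → (∃ C, ∀ v, |ψ₂ v| ≤ C) →
      Expec w (fun ω => (ψ₁ fun i => X ω i.1) * (ψ₂ fun i => X ω i.1))
        ≤ Expec w (fun ω => ψ₁ fun i => X ω i.1) * Expec w (fun ω => ψ₂ fun i => X ω i.1)

/-- The uniform distribution on the permutations of `Fin n`. -/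
def unifPerm (n : ℕ) : Equiv.Perm (Fin n) → ℝ := fun _ => (Nat.factorial n : ℝ)⁻¹

/-- The random vector with the permutation distribution on `a`:
`X = (a_{σ(1)}, …, a_{σ(n)})` for a uniformly random permutation `σ`. -/
def permVec {n : ℕ} (a : Fin n → ℝ) (σ : Equiv.Perm (Fin n)) : Fin n → ℝ :=
  fun i => a (σ i)

/-- The score vector uniformly distributed on the four points
`(1,0,2,0), (0,2,1,0), (1,0,0,2), (0,2,0,1)`. -/
def ko4Score : Fin 4 → Fin 4 → ℝ :=
  ![![1, 0, 2, 0], ![0, 2, 1, 0], ![1, 0, 0, 2], ![0, 2, 0, 1]]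

def ko4Unif : Fin 4 → ℝ := fun _ => (4 : ℝ)⁻¹

/-- The clamped test function used to refute NRD/NLTD/NRTD. -/
def ko4φ : ({i : Fin 4 // i ∈ ({2} : Finset (Fin 4))} → ℝ) → ℝ :=
  fun v => max (min (v ⟨2, by simp⟩) 2) 0

lemma ko4φ_mono : Monotone ko4φ := by
  intro u v h
  exact max_le_max (min_le_min (h _) le_rfl) le_rfl

lemma ko4φ_bdd : ∃ C, ∀ v, |ko4φ v| ≤ C := by
  refine ⟨2, fun v => ?_⟩
  rw [abs_of_nonneg (le_max_right _ _)]
  exact max_le (min_le_right _ _) (by norm_num)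

/-- the random vector `S` uniform on
`{(1,0,2,0), (0,2,1,0), (1,0,0,2), (0,2,0,1)}` is not NRD, not NLTD and not NRTD;
in particular `E[S₃|S₁=0] = 1/2 < 1 = E[S₃|S₁=1]`,
`E[S₃|S₁≤0] = 1/2 < 3/4 = E[S₃|S₁≤1]` and `E[S₃|S₁≥0] = 3/4 < 1 = E[S₃|S₁≥1]`. -/
theorem knockout4_deterministic_draw_example_not_NRD_NLTD_NRTD :
    ¬ IsNRD ko4Unif ko4Score ∧ ¬ IsNLTD ko4Unif ko4Score ∧ ¬ IsNRTD ko4Unif ko4Score ∧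
    CExp ko4Unif (fun ω => ko4Score ω 0 = 0) (fun ω => ko4Score ω 2) = 1 / 2 ∧
    CExp ko4Unif (fun ω => ko4Score ω 0 = 1) (fun ω => ko4Score ω 2) = 1 ∧
    CExp ko4Unif (fun ω => ko4Score ω 0 = 0) (fun ω => ko4Score ω 2)
      < CExp ko4Unif (fun ω => ko4Score ω 0 = 1) (fun ω => ko4Score ω 2) ∧
    CExp ko4Unif (fun ω => ko4Score ω 0 ≤ 0) (fun ω => ko4Score ω 2) = 1 / 2 ∧
    CExp ko4Unif (fun ω => ko4Score ω 0 ≤ 1) (fun ω => ko4Score ω 2) = 3 / 4 ∧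
    CExp ko4Unif (fun ω => ko4Score ω 0 ≤ 0) (fun ω => ko4Score ω 2)
      < CExp ko4Unif (fun ω => ko4Score ω 0 ≤ 1) (fun ω => ko4Score ω 2) ∧
    CExp ko4Unif (fun ω => (0 : ℝ) ≤ ko4Score ω 0) (fun ω => ko4Score ω 2) = 3 / 4 ∧
    CExp ko4Unif (fun ω => (1 : ℝ) ≤ ko4Score ω 0) (fun ω => ko4Score ω 2) = 1 ∧
    CExp ko4Unif (fun ω => (0 : ℝ) ≤ ko4Score ω 0) (fun ω => ko4Score ω 2)
      < CExp ko4Unif (fun ω => (1 : ℝ) ≤ ko4Score ω 0) (fun ω => ko4Score ω 2) := by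
  refine ⟨?_, ?_, ?_, ?_, ?_, ?_, ?_, ?_, ?_, ?_, ?_, ?_⟩
  · -- not NRD
    intro h
    have key := h {2} {0} (by decide) (fun _ => 0) (fun _ => 1)
      (by intro j _; norm_num)
      (by norm_num [Pr, ko4Unif, ko4Score, Fin.sum_univ_four, Matrix.vecHead, Matrix.vecTail, Matrix.cons_val_two, Matrix.cons_val_three])
      (by norm_num [Pr, ko4Unif, ko4Score, Fin.sum_univ_four, Matrix.vecHead, Matrix.vecTail, Matrix.cons_val_two, Matrix.cons_val_three])
      ko4φ ko4φ_mono ko4φ_bdd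
    simp only [Finset.mem_singleton, forall_eq] at key
    norm_num [CExp, Pr, ko4φ, ko4Unif, ko4Score, Fin.sum_univ_four,
      Matrix.vecHead, Matrix.vecTail, Matrix.cons_val_two, Matrix.cons_val_three] at key
  · -- not NLTD
    intro h
    have key := h {2} {0} (by decide) (fun _ => 0) (fun _ => 1)
      (by intro j _; norm_num)
      (by norm_num [Pr, ko4Unif, ko4Score, Fin.sum_univ_four, Matrix.vecHead, Matrix.vecTail, Matrix.cons_val_two, Matrix.cons_val_three])
      (by norm_num [Pr, ko4Unif, ko4Score, Fin.sum_univ_four, Matrix.vecHead, Matrix.vecTail, Matrix.cons_val_two, Matrix.cons_val_three])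
      ko4φ ko4φ_mono ko4φ_bdd
    simp only [Finset.mem_singleton, forall_eq] at key
    norm_num [CExp, Pr, ko4φ, ko4Unif, ko4Score, Fin.sum_univ_four,
      Matrix.vecHead, Matrix.vecTail, Matrix.cons_val_two, Matrix.cons_val_three] at key
  · -- not NRTD
    intro h
    have key := h {2} {0} (by decide) (fun _ => -1) (fun _ => 1/2)
      (by intro j _; norm_num)
      (by norm_num [Pr, ko4Unif, ko4Score, Fin.sum_univ_four, Matrix.vecHead, Matrix.vecTail, Matrix.cons_val_two, Matrix.cons_val_three])
      (by norm_num [Pr, ko4Unif, ko4Score, Fin.sum_univ_four, Matrix.vecHead, Matrix.vecTail, Matrix.cons_val_two, Matrix.cons_val_three])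
      ko4φ ko4φ_mono ko4φ_bdd
    simp only [Finset.mem_singleton, forall_eq] at key
    norm_num [CExp, Pr, ko4φ, ko4Unif, ko4Score, Fin.sum_univ_four,
      Matrix.vecHead, Matrix.vecTail, Matrix.cons_val_two, Matrix.cons_val_three] at key
  all_goals
    norm_num [CExp, Pr, ko4Unif, ko4Score, Fin.sum_univ_four, Matrix.vecHead, Matrix.vecTail, Matrix.cons_val_two, Matrix.cons_val_three]
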